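/- Let p : Ω → Λ be a covering of k-graphs, let (𝒢(Λ), i) be a fundamental groupoid of Λ, and let 𝒢(Λ) act on Ω⁰ by the corresponding action. Then the k-graph Ω is connected if and only if the action of 𝒢(Λ) on Ω⁰ is transitive. -/

import Mathlib

/-!
Arrows-only formalization of `k`-graphs (higher-rank graphs), their coverings,
fundamental groupoids, and groupoid actions, following Pask–Quigg–Raeburn,
"Coverings of k-graphs".

A small category is encoded by its set of arrows `A` together with
source/range maps `src rng : A → A` (whose common image is the set of
identities = vertices) and a (guarded) total composition `comp : A → A → A`,
where `comp f g` is the composite "f after g", meaningful when `src f = rng g`.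
A `k`-graph additionally has a degree map `deg : A → (Fin k → ℕ)` which is
functorial and satisfies the unique factorization property.
-/

namespace KGraphCovering

/-- A `k`-graph in arrows-only form. -/
structure KGraphStruct (k : ℕ) (A : Type) : Type where
  src : A → A
  rng : A → A
  comp : A → A → A
  deg : A → (Fin k → ℕ)
  src_src : ∀ f, src (src f) = src f
  rng_src : ∀ f, rng (src f) = src f
  src_rng : ∀ f, src (rng f) = rng f
  rng_rng : ∀ f, rng (rng f) = rng f
  comp_src_id : ∀ f, comp f (src f) = f
  rng_comp_id : ∀ f, comp (rng f) f = f
  src_comp : ∀ f g, src f = rng g → src (comp f g) = src g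
  rng_comp : ∀ f g, src f = rng g → rng (comp f g) = rng f
  assoc : ∀ f g h, src f = rng g → src g = rng h →
    comp (comp f g) h = comp f (comp g h)
  deg_comp : ∀ f g, src f = rng g → deg (comp f g) = deg f + deg g
  deg_src : ∀ f, deg (src f) = 0
  factor : ∀ f m n, deg f = m + n →
    ∃! q : A × A, src q.1 = rng q.2 ∧ deg q.1 = m ∧ deg q.2 = n ∧ comp q.1 q.2 = f

namespace KGraphStruct

variable {k : ℕ} {A : Type}

/-- The vertices (objects) are the identity arrows. -/
def IsVertex (S : KGraphStruct k A) (v : A) : Prop := S.src v = v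

/-- A `k`-graph is connected if the equivalence relation generated by
"there is a morphism from `v` to `u`" relates all pairs of vertices. -/
def Connected (S : KGraphStruct k A) : Prop :=
  ∀ u v, S.IsVertex u → S.IsVertex v →
    Relation.EqvGen (fun a b => ∃ f, S.rng f = a ∧ S.src f = b) u v

end KGraphStruct

/-- A groupoid in arrows-only form. -/
structure GroupoidStruct (B : Type) : Type where
  src : B → B
  rng : B → B
  comp : B → B → B
  inv : B → B
  src_src : ∀ f, src (src f) = src f
  rng_src : ∀ f, rng (src f) = src f
  src_rng : ∀ f, src (rng f) = rng f
  rng_rng : ∀ f, rng (rng f) = rng f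
  comp_src_id : ∀ f, comp f (src f) = f
  rng_comp_id : ∀ f, comp (rng f) f = f
  src_comp : ∀ f g, src f = rng g → src (comp f g) = src g
  rng_comp : ∀ f g, src f = rng g → rng (comp f g) = rng f
  assoc : ∀ f g h, src f = rng g → src g = rng h →
    comp (comp f g) h = comp f (comp g h)
  src_inv : ∀ f, src (inv f) = rng f
  rng_inv : ∀ f, rng (inv f) = src f
  inv_comp_self : ∀ f, comp (inv f) f = src f
  comp_inv_self : ∀ f, comp f (inv f) = rng f

namespace GroupoidStruct

variable {B : Type}

/-- The vertices (objects) of a groupoid are the identity arrows. -/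
def IsVertex (G : GroupoidStruct B) (v : B) : Prop := G.src v = v

/-- A subgroup of the isotropy group `x𝒢x`, as a set of arrows. -/
def IsSubgroupAt (G : GroupoidStruct B) (x : B) (H : Set B) : Prop :=
  (∀ a ∈ H, G.src a = x ∧ G.rng a = x) ∧ x ∈ H ∧
  (∀ a ∈ H, ∀ b ∈ H, G.comp a b ∈ H) ∧ (∀ a ∈ H, G.inv a ∈ H)

/-- `K` is a conjugate of `H` in the isotropy group at `x`. -/
def ConjAt (G : GroupoidStruct B) (x : B) (H K : Set B) : Prop :=
  ∃ g, G.src g = x ∧ G.rng g = x ∧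
    K = (fun a => G.comp (G.comp g a) (G.inv g)) '' H

/-- `H` is a normal subset of the isotropy group at `x`. -/
def IsNormalAt (G : GroupoidStruct B) (x : B) (H : Set B) : Prop :=
  ∀ g, G.src g = x → G.rng g = x → ∀ a ∈ H, G.comp (G.comp g a) (G.inv g) ∈ H

/-- The normalizer of `H` in the isotropy group at `x`. -/
def normalizerAt (G : GroupoidStruct B) (x : B) (H : Set B) : Set B :=
  {g | G.src g = x ∧ G.rng g = x ∧
    (fun a => G.comp (G.comp g a) (G.inv g)) '' H = H}

end GroupoidStruct

/-- `f` is a morphism of `k`-graphs (a degree-preserving functor). -/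
def IsKGraphHomFun {k : ℕ} {A A' : Type} (S : KGraphStruct k A)
    (T : KGraphStruct k A') (f : A → A') : Prop :=
  (∀ a, f (S.src a) = T.src (f a)) ∧
  (∀ a, f (S.rng a) = T.rng (f a)) ∧
  (∀ a b, S.src a = S.rng b → f (S.comp a b) = T.comp (f a) (f b)) ∧
  (∀ a, T.deg (f a) = S.deg a)

/-- `f` is a functor from a `k`-graph to a groupoid. -/
def IsFunctorToGpdFun {k : ℕ} {A B : Type} (S : KGraphStruct k A)
    (G : GroupoidStruct B) (f : A → B) : Prop :=
  (∀ a, f (S.src a) = G.src (f a)) ∧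
  (∀ a, f (S.rng a) = G.rng (f a)) ∧
  (∀ a b, S.src a = S.rng b → f (S.comp a b) = G.comp (f a) (f b))

/-- `f` is a morphism of groupoids (a functor). -/
def IsGpdHomFun {B C : Type} (G : GroupoidStruct B) (H : GroupoidStruct C)
    (f : B → C) : Prop :=
  (∀ a, f (G.src a) = H.src (f a)) ∧
  (∀ a, f (G.rng a) = H.rng (f a)) ∧
  (∀ a b, G.src a = G.rng b → f (G.comp a b) = H.comp (f a) (f b))

/-- `p : Ω → Λ` is a covering of `k`-graphs: a surjective `k`-graph morphism
which maps `Ωv` bijectively onto `Λp(v)` and `vΩ` bijectively onto `p(v)Λ`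
for every vertex `v` of `Ω`. -/
structure IsCovering {k : ℕ} {A A' : Type} (S : KGraphStruct k A')
    (T : KGraphStruct k A) (p : A' → A) : Prop where
  hom : IsKGraphHomFun S T p
  surj : Function.Surjective p
  src_inj : ∀ a b, S.src a = S.src b → p a = p b → a = b
  src_lift : ∀ v, S.IsVertex v → ∀ g, T.src g = p v → ∃ a, S.src a = v ∧ p a = g
  rng_inj : ∀ a b, S.rng a = S.rng b → p a = p b → a = b
  rng_lift : ∀ v, S.IsVertex v → ∀ g, T.rng g = p v → ∃ a, S.rng a = v ∧ p a = g

/-- A fundamental groupoid of a `k`-graph `S`: a groupoid `G` whose object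
set is identified with the vertex set of `S` via the canonical functor `i`
(which is bijective on objects), with the universal property that every
functor from `S` to a groupoid factors uniquely through `i`. -/
structure FundamentalGroupoid {k : ℕ} {A : Type} (S : KGraphStruct k A) :
    Type 1 where
  B : Type
  G : GroupoidStruct B
  i : A → B
  i_hom : IsFunctorToGpdFun S G i
  obj_bij : ∀ w, G.IsVertex w → ∃! v, S.IsVertex v ∧ i v = w
  univ : ∀ {C : Type} (H : GroupoidStruct C) (F : A → C),
    IsFunctorToGpdFun S H F →
    ∃! F' : B → C, IsGpdHomFun G H F' ∧ ∀ a, F' (i a) = F a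

/-- The fundamental group `π(Λ,x)` at a vertex `x`, as the isotropy of the
fundamental groupoid at `i x`. -/
def FundamentalGroupoid.pi1 {k : ℕ} {A : Type} {S : KGraphStruct k A}
    (F : FundamentalGroupoid S) (x : A) : Set F.B :=
  {a | F.G.src a = F.i x ∧ F.G.rng a = F.i x}

/-- An automorphism of the covering `p : Ω → Λ`. -/
def IsCoveringAut {k : ℕ} {A A' : Type} (Ω : KGraphStruct k A')
    (Λ : KGraphStruct k A) (p : A' → A) (φ : A' → A') : Prop :=
  Function.Bijective φ ∧ IsKGraphHomFun Ω Ω φ ∧ ∀ a, p (φ a) = p a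

/-- The action of the fundamental groupoid `F = 𝒢(Λ)` on the vertex set of a
covering `p : Ω → Λ`, determined by `i(p(λ)) ⬝ s(λ) = r(λ)`.  The fiber of a
vertex `w` of `Ω` is over the object `F.i (p w)`. -/
structure CorrespondingAction {k : ℕ} {A A' : Type} (Ω : KGraphStruct k A')
    (Λ : KGraphStruct k A) (F : FundamentalGroupoid Λ) (p : A' → A)
    (act : F.B → A' → A') : Prop where
  act_vertex : ∀ a w, Ω.IsVertex w → F.G.src a = F.i (p w) →
    Ω.IsVertex (act a w) ∧ F.i (p (act a w)) = F.G.rng a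
  act_id : ∀ w, Ω.IsVertex w → act (F.i (p w)) w = w
  act_comp : ∀ a b w, Ω.IsVertex w → F.G.src b = F.i (p w) →
    F.G.src a = F.G.rng b → act (F.G.comp a b) w = act a (act b w)
  act_cov : ∀ lam, act (F.i (p lam)) (Ω.src lam) = Ω.rng lam

/-- An action of a groupoid `G` on a set `V`, presented by an anchor map
`fib : V → B` (landing in vertices) and a guarded action map. -/
structure GpdActionStruct {B : Type} (G : GroupoidStruct B) (V : Type) :
    Type where
  fib : V → B
  act : B → V → V
  fib_vertex : ∀ v, G.src (fib v) = fib v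
  act_fib : ∀ a v, G.src a = fib v → fib (act a v) = G.rng a
  act_id : ∀ v, act (fib v) v = v
  act_comp : ∀ a b v, G.src b = fib v → G.src a = G.rng b →
    act (G.comp a b) v = act a (act b v)

namespace GpdActionStruct

variable {B V W : Type} {G : GroupoidStruct B}

/-- Transitivity of a groupoid action. -/
def Transitive (ρ : GpdActionStruct G V) : Prop :=
  ∀ u v : V, ∃ a, G.src a = ρ.fib v ∧ ρ.act a v = u

/-- The stability group of the action at `v`. -/
def stab (ρ : GpdActionStruct G V) (v : V) : Set B :=
  {a | G.src a = ρ.fib v ∧ G.rng a = ρ.fib v ∧ ρ.act a v = v}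

/-- Freeness of a groupoid action: all stability groups are trivial. -/
def Free (ρ : GpdActionStruct G V) : Prop :=
  ∀ (v : V) (a : B), a ∈ ρ.stab v → a = ρ.fib v

end GpdActionStruct

/-- A morphism of actions of the groupoid `G`: a fiber-preserving
equivariant map. -/
def IsActionHom {B V W : Type} {G : GroupoidStruct B}
    (ρ : GpdActionStruct G V) (σ : GpdActionStruct G W) (φ : V → W) : Prop :=
  (∀ v, σ.fib (φ v) = ρ.fib v) ∧
  ∀ a v, G.src a = ρ.fib v → φ (ρ.act a v) = σ.act a (φ v)

/-- An automorphism of an action of the groupoid `G`. -/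
def IsActionAut {B V : Type} {G : GroupoidStruct B}
    (ρ : GpdActionStruct G V) (φ : V → V) : Prop :=
  Function.Bijective φ ∧ IsActionHom ρ ρ φ

/-- A universal covering: a connected covering admitting a morphism of
coverings to every connected covering of the base. -/
def IsUniversalCovering {k : ℕ} {A A' : Type} (Ω : KGraphStruct k A')
    (Λ : KGraphStruct k A) (p : A' → A) : Prop :=
  IsCovering Ω Λ p ∧ Ω.Connected ∧
  ∀ (A'' : Type) (Sg : KGraphStruct k A'') (q : A'' → A),
    IsCovering Sg Λ q → Sg.Connected →
    ∃ φ : A' → A'', IsKGraphHomFun Ω Sg φ ∧ ∀ a, q (φ a) = p a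

end KGraphCovering

namespace KGraphCovering

/-! ### Auxiliary lemmas -/

lemma GroupoidStruct.inv_inv {B : Type} (G : GroupoidStruct B) (f : B) :
    G.inv (G.inv f) = f := by
  have h1 : G.src f = G.rng (G.inv f) := (G.rng_inv f).symm
  have h2 : G.src (G.inv f) = G.rng (G.inv (G.inv f)) := (G.rng_inv (G.inv f)).symm
  calc G.inv (G.inv f)
      = G.comp (G.rng (G.inv (G.inv f))) (G.inv (G.inv f)) := (G.rng_comp_id _).symm
    _ = G.comp (G.comp f (G.inv f)) (G.inv (G.inv f)) := by
        rw [G.rng_inv, G.src_inv, ← G.comp_inv_self]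
    _ = G.comp f (G.comp (G.inv f) (G.inv (G.inv f))) := G.assoc _ _ _ h1 h2
    _ = G.comp f (G.rng (G.inv f)) := by rw [G.comp_inv_self]
    _ = G.comp f (G.src f) := by rw [G.rng_inv]
    _ = f := G.comp_src_id f

/-- The set of arrows of the fundamental groupoid generated by the image of
the canonical functor. -/
inductive Gen {k : ℕ} {A : Type} {S : KGraphStruct k A}
    (F : FundamentalGroupoid S) : F.B → Prop
  | base (a : A) : Gen F (F.i a)
  | inv {b : F.B} : Gen F b → Gen F (F.G.inv b)
  | comp {a b : F.B} : F.G.src a = F.G.rng b → Gen F a → Gen F b →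
      Gen F (F.G.comp a b)

lemma Gen.src' {k : ℕ} {A : Type} {S : KGraphStruct k A}
    {F : FundamentalGroupoid S} {b : F.B} (h : Gen F b) : Gen F (F.G.src b) := by
  have := Gen.comp (by rw [F.G.src_inv]) (Gen.inv h) h
  rwa [F.G.inv_comp_self] at this

lemma Gen.rng' {k : ℕ} {A : Type} {S : KGraphStruct k A}
    {F : FundamentalGroupoid S} {b : F.B} (h : Gen F b) : Gen F (F.G.rng b) := by
  have := Gen.comp (by rw [F.G.rng_inv]) h (Gen.inv h)
  rwa [F.G.comp_inv_self] at this

open Classical in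
/-- The subgroupoid generated by the image of `i`, as a groupoid structure on
a subtype. -/
noncomputable def genGpd {k : ℕ} {A : Type} {S : KGraphStruct k A}
    (F : FundamentalGroupoid S) : GroupoidStruct {b : F.B // Gen F b} where
  src b := ⟨F.G.src b.1, b.2.src'⟩
  rng b := ⟨F.G.rng b.1, b.2.rng'⟩
  comp a b := if h : F.G.src a.1 = F.G.rng b.1 then
      ⟨F.G.comp a.1 b.1, Gen.comp h a.2 b.2⟩ else ⟨F.G.src a.1, a.2.src'⟩
  inv b := ⟨F.G.inv b.1, b.2.inv⟩
  src_src f := Subtype.ext (F.G.src_src f.1)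
  rng_src f := Subtype.ext (F.G.rng_src f.1)
  src_rng f := Subtype.ext (F.G.src_rng f.1)
  rng_rng f := Subtype.ext (F.G.rng_rng f.1)
  comp_src_id f := by
    dsimp only
    rw [dif_pos (F.G.rng_src f.1).symm]
    exact Subtype.ext (F.G.comp_src_id f.1)
  rng_comp_id f := by
    dsimp only
    rw [dif_pos (F.G.src_rng f.1)]
    exact Subtype.ext (F.G.rng_comp_id f.1)
  src_comp f g h := by
    have h' : F.G.src f.1 = F.G.rng g.1 := congrArg Subtype.val h
    rw [dif_pos h']
    exact Subtype.ext (F.G.src_comp f.1 g.1 h')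
  rng_comp f g h := by
    have h' : F.G.src f.1 = F.G.rng g.1 := congrArg Subtype.val h
    rw [dif_pos h']
    exact Subtype.ext (F.G.rng_comp f.1 g.1 h')
  assoc f g h hfg hgh := by
    have h1 : F.G.src f.1 = F.G.rng g.1 := congrArg Subtype.val hfg
    have h2 : F.G.src g.1 = F.G.rng h.1 := congrArg Subtype.val hgh
    rw [dif_pos h1, dif_pos h2, dif_pos ((F.G.src_comp f.1 g.1 h1).trans h2),
      dif_pos (h1.trans (F.G.rng_comp g.1 h.1 h2).symm)]
    exact Subtype.ext (F.G.assoc f.1 g.1 h.1 h1 h2)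
  src_inv f := Subtype.ext (F.G.src_inv f.1)
  rng_inv f := Subtype.ext (F.G.rng_inv f.1)
  inv_comp_self f := by
    dsimp only
    rw [dif_pos (F.G.src_inv f.1)]
    exact Subtype.ext (F.G.inv_comp_self f.1)
  comp_inv_self f := by
    dsimp only
    rw [dif_pos (F.G.rng_inv f.1).symm]
    exact Subtype.ext (F.G.comp_inv_self f.1)

lemma genGpd_comp_val {k : ℕ} {A : Type} {S : KGraphStruct k A}
    (F : FundamentalGroupoid S) (x y : {b : F.B // Gen F b})
    (h : F.G.src x.1 = F.G.rng y.1) :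
    ((genGpd F).comp x y).1 = F.G.comp x.1 y.1 := by
  unfold genGpd
  dsimp only
  rw [dif_pos h]

/-- The fundamental groupoid is generated by the image of `i`. -/
lemma gen_all {k : ℕ} {A : Type} {S : KGraphStruct k A}
    (F : FundamentalGroupoid S) (b : F.B) : Gen F b := by
  set G' := genGpd F with hG'
  set F0 : A → {b : F.B // Gen F b} := fun a => ⟨F.i a, Gen.base a⟩ with hF0def
  have hF0 : IsFunctorToGpdFun S G' F0 := by
    refine ⟨fun a => Subtype.ext (F.i_hom.1 a), fun a => Subtype.ext (F.i_hom.2.1 a),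
      fun a b h => ?_⟩
    have h' : F.G.src (F.i a) = F.G.rng (F.i b) := by
      rw [← F.i_hom.1, ← F.i_hom.2.1, h]
    refine Subtype.ext ?_
    rw [genGpd_comp_val F _ _ h']
    exact F.i_hom.2.2 a b h
  obtain ⟨F', ⟨hF'hom, hF'i⟩, -⟩ := F.univ G' F0 hF0
  set F'' : F.B → F.B := fun x => (F' x).1 with hF''def
  have hF'' : IsGpdHomFun F.G F.G F'' := by
    refine ⟨fun x => congrArg Subtype.val (hF'hom.1 x),
      fun x => congrArg Subtype.val (hF'hom.2.1 x), fun x y h => ?_⟩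
    have hc : G'.src (F' x) = G'.rng (F' y) := by
      rw [← hF'hom.1, ← hF'hom.2.1, h]
    have hc' : F.G.src (F' x).1 = F.G.rng (F' y).1 := congrArg Subtype.val hc
    exact (congrArg Subtype.val (hF'hom.2.2 x y h)).trans
      (genGpd_comp_val F _ _ hc')
  obtain ⟨Id', -, hId'uniq⟩ := F.univ F.G F.i F.i_hom
  have h1 : F'' = Id' := hId'uniq F'' ⟨hF'', fun a => congrArg Subtype.val (hF'i a)⟩
  have h2 : (id : F.B → F.B) = Id' :=
    hId'uniq id ⟨⟨fun _ => rfl, fun _ => rfl, fun _ _ _ => rfl⟩, fun _ => rfl⟩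
  have h3 : F'' b = b := by rw [h1, ← h2]; rfl
  exact h3 ▸ (F' b).2

section Covering

variable {k : ℕ} {A A' : Type}
  (Λ : KGraphStruct k A) (Ω : KGraphStruct k A')
  (FΛ : FundamentalGroupoid Λ)
  (p : A' → A) (hp : IsCovering Ω Λ p)
  (act : FΛ.B → A' → A') (hact : CorrespondingAction Ω Λ FΛ p act)

include hp in
lemma p_vertex {v : A'} (hv : Ω.IsVertex v) : Λ.IsVertex (p v) := by
  show Λ.src (p v) = p v
  rw [← hp.hom.1, hv]

lemma i_inj {x y : A} (hx : Λ.IsVertex x) (hy : Λ.IsVertex y)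
    (h : FΛ.i x = FΛ.i y) : x = y := by
  have hGx : FΛ.G.IsVertex (FΛ.i x) := by
    show FΛ.G.src (FΛ.i x) = FΛ.i x
    rw [← FΛ.i_hom.1, hx]
  obtain ⟨v, -, huniq⟩ := FΛ.obj_bij (FΛ.i x) hGx
  exact (huniq x ⟨hx, rfl⟩).trans (huniq y ⟨hy, h.symm⟩).symm

include hact in
lemma act_cancel (c : FΛ.B) {v : A'} (hv : Ω.IsVertex v)
    (h : FΛ.G.src c = FΛ.i (p v)) : act (FΛ.G.inv c) (act c v) = v := by
  rw [← hact.act_comp (FΛ.G.inv c) c v hv h (FΛ.G.src_inv c),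
    FΛ.G.inv_comp_self, h, hact.act_id v hv]

include hp hact in
lemma act_eqvgen {b : FΛ.B} (hb : Gen FΛ b) :
    (∀ v, Ω.IsVertex v → FΛ.G.src b = FΛ.i (p v) →
      Relation.EqvGen (fun a b => ∃ f, Ω.rng f = a ∧ Ω.src f = b) (act b v) v) ∧
    (∀ v, Ω.IsVertex v → FΛ.G.rng b = FΛ.i (p v) →
      Relation.EqvGen (fun a b => ∃ f, Ω.rng f = a ∧ Ω.src f = b)
        (act (FΛ.G.inv b) v) v) := by
  induction hb with
  | base α =>
    constructor
    · intro v hv h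
      have h1 : FΛ.i (Λ.src α) = FΛ.i (p v) := (FΛ.i_hom.1 α).trans h
      have h2 : Λ.src α = p v :=
        i_inj Λ FΛ (Λ.src_src α) (p_vertex Λ Ω p hp hv) h1
      obtain ⟨lam, hls, hlp⟩ := hp.src_lift v hv α h2
      have h3 : act (FΛ.i α) v = Ω.rng lam := by
        rw [← hlp, ← hls]; exact hact.act_cov lam
      rw [h3]
      exact Relation.EqvGen.rel _ _ ⟨lam, rfl, hls⟩
    · intro v hv h
      have h1 : FΛ.i (Λ.rng α) = FΛ.i (p v) := (FΛ.i_hom.2.1 α).trans h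
      have h2 : Λ.rng α = p v :=
        i_inj Λ FΛ (Λ.src_rng α) (p_vertex Λ Ω p hp hv) h1
      obtain ⟨lam, hlr, hlp⟩ := hp.rng_lift v hv α h2
      have hsv : Ω.IsVertex (Ω.src lam) := Ω.src_src lam
      have hsrc : FΛ.G.src (FΛ.i α) = FΛ.i (p (Ω.src lam)) := by
        rw [← FΛ.i_hom.1, hp.hom.1, hlp]
      have h3 : act (FΛ.i α) (Ω.src lam) = v := by
        rw [← hlp, hact.act_cov lam]; exact hlr
      have h4 : act (FΛ.G.inv (FΛ.i α)) v = Ω.src lam := by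
        rw [← h3]
        exact act_cancel Λ Ω FΛ p act hact (FΛ.i α) hsv hsrc
      rw [h4]
      exact Relation.EqvGen.symm _ _ (Relation.EqvGen.rel _ _ ⟨lam, hlr, rfl⟩)
  | inv hc ihc =>
    refine ⟨fun v hv h => ?_, fun v hv h => ?_⟩
    · rw [FΛ.G.src_inv] at h
      exact ihc.2 v hv h
    · rw [FΛ.G.rng_inv] at h
      rw [FΛ.G.inv_inv]
      exact ihc.1 v hv h
  | @comp a b hab ha hb iha ihb =>
    refine ⟨fun v hv h => ?_, fun v hv h => ?_⟩
    · have hsb : FΛ.G.src b = FΛ.i (p v) := by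
        rw [← FΛ.G.src_comp a b hab, h]
      have hb1 := ihb.1 v hv hsb
      obtain ⟨hwv, hwi⟩ := hact.act_vertex b v hv hsb
      have hsa : FΛ.G.src a = FΛ.i (p (act b v)) := by rw [hwi, hab]
      have ha1 := iha.1 _ hwv hsa
      rw [hact.act_comp a b v hv hsb hab]
      exact Relation.EqvGen.trans _ _ _ ha1 hb1
    · have hra : FΛ.G.rng a = FΛ.i (p v) := by
        rw [← FΛ.G.rng_comp a b hab, h]
      have ha2 := iha.2 v hv hra
      have hsia : FΛ.G.src (FΛ.G.inv a) = FΛ.i (p v) := by rw [FΛ.G.src_inv, hra]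
      obtain ⟨hwv, hwi⟩ := hact.act_vertex (FΛ.G.inv a) v hv hsia
      set w := act (FΛ.G.inv a) v with hwdef
      have hwib : FΛ.i (p w) = FΛ.G.rng b := by rw [hwi, FΛ.G.rng_inv, hab]
      have hb2 := ihb.2 w hwv hwib.symm
      have hsib : FΛ.G.src (FΛ.G.inv b) = FΛ.i (p w) := by
        rw [FΛ.G.src_inv, hwib]
      obtain ⟨huv, hui⟩ := hact.act_vertex (FΛ.G.inv b) w hwv hsib
      set u := act (FΛ.G.inv b) w with hudef
      have huib : FΛ.i (p u) = FΛ.G.src b := by rw [hui, FΛ.G.rng_inv]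
      -- act b u = w
      have hbu : act b u = w := by
        rw [hudef, ← hact.act_comp b (FΛ.G.inv b) w hwv hsib (FΛ.G.rng_inv b).symm,
          FΛ.G.comp_inv_self, ← hwib, hact.act_id w hwv]
      -- act a w = v
      have haw : act a w = v := by
        rw [hwdef, ← hact.act_comp a (FΛ.G.inv a) v hv hsia (FΛ.G.rng_inv a).symm,
          FΛ.G.comp_inv_self, hra, hact.act_id v hv]
      have hscu : FΛ.G.src (FΛ.G.comp a b) = FΛ.i (p u) := by
        rw [FΛ.G.src_comp a b hab, huib]
      have hcu : act (FΛ.G.comp a b) u = v := by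
        rw [hact.act_comp a b u huv huib.symm hab, hbu, haw]
      have hfin : act (FΛ.G.inv (FΛ.G.comp a b)) v = u := by
        rw [← hcu]
        exact act_cancel Λ Ω FΛ p act hact (FΛ.G.comp a b) huv hscu
      rw [hfin]
      exact Relation.EqvGen.trans _ _ _ hb2 ha2

end Covering

/-- A covering `p : Ω → Λ` has connected total space `Ω` if
and only if the corresponding action of `𝒢(Λ)` on the vertex set `Ω⁰` is
transitive. -/
theorem connected_iff_transitive {k : ℕ} {A A' : Type}
    (Λ : KGraphStruct k A) (Ω : KGraphStruct k A')
    (FΛ : FundamentalGroupoid Λ)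
    (p : A' → A) (hp : IsCovering Ω Λ p)
    (act : FΛ.B → A' → A') (hact : CorrespondingAction Ω Λ FΛ p act) :
    Ω.Connected ↔
      ∀ w w', Ω.IsVertex w → Ω.IsVertex w' →
        ∃ a, FΛ.G.src a = FΛ.i (p w') ∧ act a w' = w := by
  constructor
  · intro hconn w w' hw hw'
    have h := hconn w w' hw hw'
    have key : ∀ u v, Relation.EqvGen (fun a b => ∃ f, Ω.rng f = a ∧ Ω.src f = b) u v →
        u = v ∨ (Ω.IsVertex u ∧ Ω.IsVertex v ∧
          ∃ a, FΛ.G.src a = FΛ.i (p v) ∧ act a v = u) := by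
      intro u v h
      induction h with
      | rel u v huv =>
        obtain ⟨f, hfr, hfs⟩ := huv
        right
        refine ⟨hfr ▸ Ω.src_rng f, hfs ▸ Ω.src_src f, FΛ.i (p f), ?_, ?_⟩
        · rw [← FΛ.i_hom.1, ← hp.hom.1, hfs]
        · rw [← hfs, hact.act_cov f, hfr]
      | refl u => exact Or.inl rfl
      | symm u v _ ih =>
        rcases ih with h | ⟨hu, hv, a, hsa, haa⟩
        · exact Or.inl h.symm
        · right
          refine ⟨hv, hu, FΛ.G.inv a, ?_, ?_⟩
          · obtain ⟨-, hi⟩ := hact.act_vertex a v hv hsa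
            rw [FΛ.G.src_inv, ← hi, haa]
          · rw [← haa]
            exact act_cancel Λ Ω FΛ p act hact a hv hsa
      | trans u v x _ _ ih1 ih2 =>
        rcases ih1 with h1 | ⟨hu, hv, a, hsa, haa⟩
        · rcases ih2 with h2 | ⟨hv, hx, b, hsb, hbb⟩
          · exact Or.inl (h1.trans h2)
          · exact Or.inr ⟨h1 ▸ hv, hx, b, hsb, h1 ▸ hbb⟩
        · rcases ih2 with h2 | ⟨hv', hx, b, hsb, hbb⟩
          · exact Or.inr ⟨hu, h2 ▸ hv, a, h2 ▸ hsa, h2 ▸ haa⟩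
          · right
            refine ⟨hu, hx, FΛ.G.comp a b, ?_, ?_⟩
            · rw [FΛ.G.src_comp a b ?_, hsb]
              obtain ⟨-, hi⟩ := hact.act_vertex b x hx hsb
              rw [hsa, ← hbb, hi]
            · have hab : FΛ.G.src a = FΛ.G.rng b := by
                obtain ⟨-, hi⟩ := hact.act_vertex b x hx hsb
                rw [hsa, ← hbb, hi]
              rw [hact.act_comp a b x hx hsb hab, hbb, haa]
    rcases key w w' h with heq | ⟨-, -, a, hsa, haa⟩
    · refine ⟨FΛ.i (p w'), ?_, heq ▸ hact.act_id w' hw'⟩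
      rw [← FΛ.i_hom.1]
      congr 1
      exact p_vertex Λ Ω p hp hw'
    · exact ⟨a, hsa, haa⟩
  · intro htrans u v hu hv
    obtain ⟨a, hsa, haa⟩ := htrans u v hu hv
    have := (act_eqvgen Λ Ω FΛ p hp act hact (gen_all FΛ a)).1 v hv hsa
    rwa [haa] at this

end KGraphCovering
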